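/- Let f be a holomorphic function on ℍ (depending only on τ) and g a holomorphic function on ℍ×ℂ. Then for each non-negative integer r and each non-negative integer m, L_m^r(fg) = Σ_{j=0}^r (8πim)^{r−j} binom(r,j) (∂_τ^{r−j} f) · (L_m^j g), where fg denotes the function (τ,z) ↦ f(τ)g(τ,z). -/

import Mathlib

open Complex Real Finset

noncomputable section

/-- The upper half plane, as a subset of `ℂ`. -/
def UHP : Set ℂ := {τ : ℂ | 0 < τ.im}

/-- Partial derivative with respect to the first variable `τ`. -/
def dTau (f : ℂ → ℂ → ℂ) : ℂ → ℂ → ℂ := fun τ z => deriv (fun w => f w z) τ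

/-- Partial derivative with respect to the second variable `z`. -/
def dZ (f : ℂ → ℂ → ℂ) : ℂ → ℂ → ℂ := fun τ z => deriv (fun w => f τ w) z

/-- The heat operator `L_m = 8πim ∂/∂τ − ∂²/∂z²`. -/
def heatOp (m : ℤ) (f : ℂ → ℂ → ℂ) : ℂ → ℂ → ℂ :=
  fun τ z => 8 * (π : ℂ) * I * (m : ℂ) * dTau f τ z - dZ (dZ f) τ z

/-- The weight `k`, index `m` slash action of `SL(2,ℤ)` on functions `ℍ × ℂ → ℂ`. -/
def jacobiSlash (k m : ℤ) (M : Matrix.SpecialLinearGroup (Fin 2) ℤ) (f : ℂ → ℂ → ℂ) :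
    ℂ → ℂ → ℂ := fun τ z =>
  ((M.1 1 0 : ℂ) * τ + (M.1 1 1 : ℂ)) ^ (-k) *
    Complex.exp (2 * (π : ℂ) * I * (m : ℂ) *
      (-((M.1 1 0 : ℂ) * z ^ 2) / ((M.1 1 0 : ℂ) * τ + (M.1 1 1 : ℂ)))) *
    f (((M.1 0 0 : ℂ) * τ + (M.1 0 1 : ℂ)) / ((M.1 1 0 : ℂ) * τ + (M.1 1 1 : ℂ)))
      (z / ((M.1 1 0 : ℂ) * τ + (M.1 1 1 : ℂ)))

/-- The index `m` action of the lattice `ℤ²` on functions `ℍ × ℂ → ℂ`. -/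
def latticeSlash (m : ℤ) (Y : ℤ × ℤ) (f : ℂ → ℂ → ℂ) : ℂ → ℂ → ℂ := fun τ z =>
  Complex.exp (2 * (π : ℂ) * I * (m : ℂ) * ((Y.1 : ℂ) ^ 2 * τ + 2 * (Y.1 : ℂ) * z)) *
    f τ (z + (Y.1 : ℂ) * τ + (Y.2 : ℂ))

/-- A Jacobi form of weight `k` and index `m`: a holomorphic function on `ℍ × ℂ`,
invariant under both slash actions, with a Fourier expansion supported on
`n ≥ 0`, `r² ≤ 4nm`. -/
structure IsJacobiForm (k m : ℤ) (f : ℂ → ℂ → ℂ) : Prop where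
  holo : DifferentiableOn ℂ (fun p : ℂ × ℂ => f p.1 p.2) {p : ℂ × ℂ | 0 < p.1.im}
  slash_invariant : ∀ M : Matrix.SpecialLinearGroup (Fin 2) ℤ, ∀ τ ∈ UHP, ∀ z : ℂ,
    jacobiSlash k m M f τ z = f τ z
  lattice_invariant : ∀ Y : ℤ × ℤ, ∀ τ ∈ UHP, ∀ z : ℂ,
    latticeSlash m Y f τ z = f τ z
  fourier : ∃ c : ℤ × ℤ → ℂ,
    (∀ n r : ℤ, (n < 0 ∨ 4 * n * m < r ^ 2) → c (n, r) = 0) ∧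
    ∀ τ ∈ UHP, ∀ z : ℂ,
      f τ z = ∑' nr : ℤ × ℤ, c nr *
        Complex.exp (2 * (π : ℂ) * I * ((nr.1 : ℂ) * τ + (nr.2 : ℂ) * z))

/-- The falling factorial `(x)_n = x(x−1)⋯(x−n+1)`. -/
def ffall (x : ℂ) (n : ℕ) : ℂ := ∏ i ∈ Finset.range n, (x - (i : ℂ))

/-- The combinatorial coefficients `C_{r,s,p}` appearing in the Rankin-Cohen brackets. -/
def Ccoef (α β γ : ℂ) (r s p : ℕ) : ℂ :=
  ffall (α + r + s + p) (s + p) / (r.factorial : ℂ) *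
    (ffall (β + r + s + p) (r + p) / (s.factorial : ℂ)) *
    (ffall (-(γ + (r : ℂ) + s + p)) (r + s) / (p.factorial : ℂ))

/-- The Rankin-Cohen bracket `[f,f']_{X,v}` of two Jacobi forms. -/
def jacobiRC (k k' m m' : ℤ) (X : ℂ) (v : ℕ) (f f' : ℂ → ℂ → ℂ) : ℂ → ℂ → ℂ :=
  fun τ z =>
    ∑ r ∈ Finset.range (v / 2 + 1), ∑ s ∈ Finset.range (v / 2 + 1 - r),
      ∑ i ∈ Finset.range (v % 2 + 1),
        Ccoef ((k : ℂ) - 3/2) ((k' : ℂ) - 3/2) ((k : ℂ) + (k' : ℂ) - 3/2 + ((v % 2 : ℕ) : ℂ))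
            r s (v / 2 - r - s) *
          ((m : ℂ) ^ (v % 2 - i) * (-(m' : ℂ)) ^ i * (1 + (m : ℂ) * X) ^ s *
            (1 - (m' : ℂ) * X) ^ r) *
          (heatOp (m + m'))^[v / 2 - r - s]
            (fun τ' z' =>
              (heatOp m)^[r] (dZ^[i] f) τ' z' * (heatOp m')^[s] (dZ^[v % 2 - i] f') τ' z') τ z


section HeatAuxSect
open Metric MeasureTheory intervalIntegral Filter Topology

namespace HeatAux


lemma isOpenUHP : IsOpen UHP := isOpen_lt continuous_const Complex.continuous_im

def U2 : Set (ℂ × ℂ) := {p : ℂ × ℂ | 0 < p.1.im}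

lemma isOpenU2 : IsOpen U2 := isOpen_lt continuous_const (Complex.continuous_im.comp continuous_fst)

lemma memU2 {τ : ℂ} (hτ : τ ∈ UHP) (z : ℂ) : (τ, z) ∈ U2 := hτ

/-- The Cauchy kernel for the derivative. -/
def K (r : ℝ) (θ : ℝ) : ℂ :=
  (2 * (π:ℝ) * I : ℂ)⁻¹ * ((circleMap 0 r θ * I) * (circleMap 0 r θ) ^ (-2 : ℤ))

lemma continuous_K {r : ℝ} (hr : r ≠ 0) : Continuous (K r) := by
  apply continuous_const.mul
  apply ((continuous_circleMap 0 r).mul continuous_const).mul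
  exact (continuous_circleMap 0 r).zpow₀ (-2) fun θ =>
    Or.inl (by simpa using circleMap_ne_center (c := (0:ℂ)) hr (θ := θ))

lemma norm_K {r : ℝ} (hr : 0 < r) (θ : ℝ) : ‖K r θ‖ = (2 * π * r)⁻¹ := by
  have h1 : ‖circleMap 0 r θ‖ = r := by
    rw [norm_circleMap_zero]; exact _root_.abs_of_pos hr
  simp [K, zpow_neg, zpow_ofNat, map_mul, map_inv₀, map_pow, h1, Complex.norm_I,
    Complex.norm_real, _root_.abs_of_pos Real.pi_pos]
  rw [sq]
  field_simp

lemma circleMap_add (c : ℂ) (R : ℝ) (θ : ℝ) : circleMap c R θ = c + circleMap 0 R θ := by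
  simp [circleMap]

/-- Cauchy integral representation of the derivative. -/
lemma deriv_rep {φ : ℂ → ℂ} {c : ℂ} {r : ℝ} (hr : 0 < r)
    (hφ : DifferentiableOn ℂ φ (closedBall c r)) :
    deriv φ c = ∫ θ in (0:ℝ)..(2*π), K r θ * φ (circleMap c r θ) := by
  have hcl : DiffContOnCl ℂ φ (ball c r) := by
    rw [← closure_ball c hr.ne'] at hφ
    exact hφ.diffContOnCl
  have hne : (2 * (π:ℂ) * I) ≠ 0 := by simp [Real.pi_ne_zero, I_ne_zero]
  have key : deriv φ c = (2 * π * I : ℂ)⁻¹ • ∮ z in C(c, r), ((z - c) ^ (-2:ℤ)) • φ z := by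
    have h := hcl.deriv_eq_smul_circleIntegral hr
    have hint : (∮ z in C(c, r), ((z - c) ^ (-2:ℤ)) • φ z)
        = ∮ z in C(c, r), (1 / (z - c) ^ 2) • φ z := by simp [zpow_neg, one_div]
    rw [hint, h, smul_smul, inv_mul_cancel₀ hne, one_smul]
  rw [key]
  simp only [circleIntegral, deriv_circleMap, circleMap_sub_center, smul_eq_mul]
  rw [← intervalIntegral.integral_const_mul]
  refine intervalIntegral.integral_congr fun θ _ => ?_
  simp only [K]
  ring


/-- Separately holomorphic and jointly continuous. -/
structure Q (h : ℂ → ℂ → ℂ) : Prop where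
  cont : ContinuousOn (fun p : ℂ × ℂ => h p.1 p.2) U2
  holo1 : ∀ z, DifferentiableOn ℂ (fun w => h w z) UHP
  holo2 : ∀ τ ∈ UHP, Differentiable ℂ (h τ)

lemma Q.slice1 {h : ℂ → ℂ → ℂ} (H : Q h) {τ : ℂ} (hτ : τ ∈ UHP) (z : ℂ) :
    DifferentiableAt ℂ (fun w => h w z) τ :=
  (H.holo1 z).differentiableAt (isOpenUHP.mem_nhds hτ)

lemma Q.slice2 {h : ℂ → ℂ → ℂ} (H : Q h) {τ : ℂ} (hτ : τ ∈ UHP) (z : ℂ) :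
    DifferentiableAt ℂ (h τ) z :=
  (H.holo2 τ hτ).differentiableAt

lemma Q.of_phol {g : ℂ → ℂ → ℂ}
    (hg : DifferentiableOn ℂ (fun p : ℂ × ℂ => g p.1 p.2) U2) : Q g where
  cont := hg.continuousOn
  holo1 z τ hτ := by
    have h1 : DifferentiableAt ℂ (fun p : ℂ × ℂ => g p.1 p.2) (τ, z) :=
      hg.differentiableAt (isOpenU2.mem_nhds (memU2 hτ z))
    have h2 : DifferentiableAt ℂ (fun w : ℂ => ((w, z) : ℂ × ℂ)) τ :=
      differentiableAt_id.prodMk (differentiableAt_const z)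
    exact (h1.comp τ h2).differentiableWithinAt
  holo2 τ hτ z := by
    have h1 : DifferentiableAt ℂ (fun p : ℂ × ℂ => g p.1 p.2) (τ, z) :=
      hg.differentiableAt (isOpenU2.mem_nhds (memU2 hτ z))
    have h2 : DifferentiableAt ℂ (fun w : ℂ => ((τ, w) : ℂ × ℂ)) z :=
      (differentiableAt_const τ).prodMk differentiableAt_id
    exact h1.comp z h2

lemma diff_deriv_entire {φ : ℂ → ℂ} (h : Differentiable ℂ φ) : Differentiable ℂ (deriv φ) := by
  have h2 := ((h.differentiableOn : DifferentiableOn ℂ φ Set.univ).analyticOnNhd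
    isOpen_univ).deriv
  exact differentiableOn_univ.mp h2.differentiableOn

lemma diff_deriv_UHP {φ : ℂ → ℂ} (h : DifferentiableOn ℂ φ UHP) :
    DifferentiableOn ℂ (deriv φ) UHP :=
  ((h.analyticOnNhd isOpenUHP).deriv).differentiableOn

lemma closedBall_subset_UHP {τ₀ : ℂ} {a : ℝ} (hτ : 0 < τ₀.im) (ha : a < τ₀.im) :
    closedBall τ₀ a ⊆ UHP := by
  intro w hw
  have h1 : |(w - τ₀).im| ≤ dist w τ₀ := by
    rw [Complex.dist_eq]; exact Complex.abs_im_le_norm _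
  have h2 : (w - τ₀).im = w.im - τ₀.im := by simp
  have h3 := abs_le.mp (h1.trans (mem_closedBall.mp hw))
  show 0 < w.im
  rw [h2] at h3
  linarith [h3.1]

lemma Q.bound {h : ℂ → ℂ → ℂ} (H : Q h) {s : Set (ℂ × ℂ)} (hs : IsCompact s)
    (hsub : s ⊆ U2) : ∃ C, ∀ p ∈ s, ‖h p.1 p.2‖ ≤ C :=
  hs.exists_bound_of_continuousOn (H.cont.mono hsub)

lemma Q.repZ {h : ℂ → ℂ → ℂ} (H : Q h) {τ : ℂ} (hτ : τ ∈ UHP) (z : ℂ) :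
    dZ h τ z = ∫ θ in (0:ℝ)..(2*π), K 1 θ * h τ (z + circleMap 0 1 θ) := by
  have h1 := deriv_rep (φ := h τ) (c := z) (r := 1) one_pos
    (H.holo2 τ hτ).differentiableOn
  rw [show dZ h τ z = deriv (h τ) z from rfl, h1]
  exact intervalIntegral.integral_congr fun θ _ => by rw [← circleMap_add]

lemma Q.repT {h : ℂ → ℂ → ℂ} (H : Q h) {τ : ℂ} {r : ℝ} (hr : 0 < r)
    (hball : closedBall τ r ⊆ UHP) (z : ℂ) :
    dTau h τ z = ∫ θ in (0:ℝ)..(2*π), K r θ * h (τ + circleMap 0 r θ) z := by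
  have h1 := deriv_rep (φ := fun w => h w z) (c := τ) hr ((H.holo1 z).mono hball)
  rw [show dTau h τ z = deriv (fun w => h w z) τ from rfl, h1]
  exact intervalIntegral.integral_congr fun θ _ => by rw [← circleMap_add]


lemma Q.contZ {h : ℂ → ℂ → ℂ} (H : Q h) :
    ContinuousOn (fun p : ℂ × ℂ => dZ h p.1 p.2) U2 := by
  intro p₀ hp₀
  have hτ₀ : 0 < p₀.1.im := hp₀
  set ε : ℝ := p₀.1.im / 2 with hε
  have hεpos : 0 < ε := by positivity
  set S : Set (ℂ × ℂ) := closedBall p₀.1 ε ×ˢ closedBall p₀.2 (1 + ε) with hS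
  have hScpt : IsCompact S := (isCompact_closedBall _ _).prod (isCompact_closedBall _ _)
  have hSsub : S ⊆ U2 := fun p hp =>
    closedBall_subset_UHP hτ₀ (by rw [hε]; linarith) hp.1
  obtain ⟨C, hC⟩ := H.bound hScpt hSsub
  set F : ℂ × ℂ → ℝ → ℂ := fun p θ => K 1 θ * h p.1 (p.2 + circleMap 0 1 θ) with hF
  have key : ContinuousWithinAt (fun p => ∫ θ in (0:ℝ)..(2*π), F p θ) U2 p₀ := by
    apply intervalIntegral.continuousWithinAt_of_dominated_interval
      (bound := fun _ => (2*π*1)⁻¹ * |C|)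
    · filter_upwards [self_mem_nhdsWithin] with p hp
      exact ((continuous_K one_ne_zero).mul (((H.holo2 p.1 hp).continuous).comp
        (continuous_const.add (continuous_circleMap 0 1)))).aestronglyMeasurable
    · have hnb : (ball p₀.1 ε ×ˢ ball p₀.2 ε) ∈ 𝓝 p₀ :=
        (isOpen_ball.prod isOpen_ball).mem_nhds ⟨mem_ball_self hεpos, mem_ball_self hεpos⟩
      filter_upwards [mem_nhdsWithin_of_mem_nhds hnb] with p hp
      refine Filter.Eventually.of_forall fun θ _ => ?_
      rw [norm_mul, norm_K one_pos]
      have hmem : ((p.1, p.2 + circleMap 0 1 θ) : ℂ × ℂ) ∈ S := by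
        constructor
        · exact ball_subset_closedBall hp.1
        · have h1 : dist (p.2 + circleMap 0 1 θ) p₀.2 ≤ dist p.2 p₀.2 + 1 := by
            calc dist (p.2 + circleMap 0 1 θ) p₀.2
                ≤ dist (p.2 + circleMap 0 1 θ) p.2 + dist p.2 p₀.2 := dist_triangle _ _ _
              _ ≤ 1 + dist p.2 p₀.2 := by
                  simp only [dist_eq_norm, add_sub_cancel_left]
                  have := norm_circleMap_zero 1 θ
                  simp only [this]
                  norm_num
              _ = dist p.2 p₀.2 + 1 := by ring
          have h2 : dist p.2 p₀.2 < ε := mem_ball.mp hp.2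
          exact mem_closedBall.mpr (by linarith)
      have := hC _ hmem
      have hCabs : ‖h p.1 (p.2 + circleMap 0 1 θ)‖ ≤ |C| := this.trans (le_abs_self C)
      exact mul_le_mul_of_nonneg_left hCabs (by positivity)
    · exact intervalIntegrable_const
    · refine Filter.Eventually.of_forall fun θ _ => ?_
      have hmap : Set.MapsTo (fun p : ℂ × ℂ => ((p.1, p.2 + circleMap 0 1 θ) : ℂ × ℂ)) U2 U2 :=
        fun p hp => hp
      have hcont : ContinuousWithinAt (fun p : ℂ × ℂ => h p.1 (p.2 + circleMap 0 1 θ)) U2 p₀ := by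
        have h1 : ContinuousWithinAt
            (fun p : ℂ × ℂ => ((p.1, p.2 + circleMap 0 1 θ) : ℂ × ℂ)) U2 p₀ :=
          (continuous_fst.prodMk (continuous_snd.add continuous_const)).continuousWithinAt
        exact ContinuousWithinAt.comp (g := fun p : ℂ × ℂ => h p.1 p.2)
          (f := fun p : ℂ × ℂ => ((p.1, p.2 + circleMap 0 1 θ) : ℂ × ℂ))
          (H.cont _ (hmap hp₀)) h1 hmap
      exact continuousWithinAt_const.mul hcont
  have hrep : ∀ p ∈ U2, dZ h p.1 p.2 = ∫ θ in (0:ℝ)..(2*π), F p θ := fun p hp =>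
    H.repZ hp p.2
  exact key.congr hrep (hrep _ hp₀)

lemma Q.contT {h : ℂ → ℂ → ℂ} (H : Q h) :
    ContinuousOn (fun p : ℂ × ℂ => dTau h p.1 p.2) U2 := by
  intro p₀ hp₀
  have hτ₀ : 0 < p₀.1.im := hp₀
  set r : ℝ := p₀.1.im / 2 with hr
  have hrpos : 0 < r := by positivity
  have hV : (ball p₀.1 (r/2) ×ˢ (Set.univ : Set ℂ)) ∈ 𝓝 p₀ :=
    (isOpen_ball.prod isOpen_univ).mem_nhds ⟨mem_ball_self (by positivity), trivial⟩
  set W : Set (ℂ × ℂ) := U2 ∩ (ball p₀.1 (r/2) ×ˢ (Set.univ : Set ℂ)) with hW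
  have hsub2 : ∀ w ∈ ball p₀.1 (r/2), closedBall w r ⊆ UHP := by
    intro w hw u hu
    apply closedBall_subset_UHP hτ₀ (a := r + r/2) (by rw [hr]; linarith)
    have := dist_triangle u w p₀.1
    have h1 : dist u w ≤ r := mem_closedBall.mp hu
    have h2 : dist w p₀.1 < r/2 := mem_ball.mp hw
    exact mem_closedBall.mpr (by linarith)
  have hcirc : ∀ (w : ℂ) (θ : ℝ), dist (w + circleMap 0 r θ) w ≤ r := by
    intro w θ
    simp only [dist_eq_norm, add_sub_cancel_left, norm_circleMap_zero]
    rw [_root_.abs_of_pos hrpos]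
  set S : Set (ℂ × ℂ) := closedBall p₀.1 (r + r/2) ×ˢ closedBall p₀.2 1 with hS
  have hScpt : IsCompact S := (isCompact_closedBall _ _).prod (isCompact_closedBall _ _)
  have hSsub : S ⊆ U2 := fun p hp =>
    closedBall_subset_UHP hτ₀ (by rw [hr]; linarith) hp.1
  obtain ⟨C, hC⟩ := H.bound hScpt hSsub
  set F : ℂ × ℂ → ℝ → ℂ := fun p θ => K r θ * h (p.1 + circleMap 0 r θ) p.2 with hF
  have key : ContinuousWithinAt (fun p => ∫ θ in (0:ℝ)..(2*π), F p θ) W p₀ := by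
    apply intervalIntegral.continuousWithinAt_of_dominated_interval
      (bound := fun _ => (2*π*r)⁻¹ * |C|)
    · filter_upwards [self_mem_nhdsWithin] with p hp
      have hco : Continuous fun θ : ℝ => h (p.1 + circleMap 0 r θ) p.2 := by
        apply (H.holo1 p.2).continuousOn.comp_continuous
          (continuous_const.add (continuous_circleMap 0 r))
        intro θ
        exact hsub2 p.1 hp.2.1 (mem_closedBall.mpr (hcirc p.1 θ))
      exact ((continuous_K hrpos.ne').mul hco).aestronglyMeasurable
    · have hnb2 : (ball p₀.1 (r/2) ×ˢ ball p₀.2 1) ∈ 𝓝 p₀ :=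
        (isOpen_ball.prod isOpen_ball).mem_nhds
          ⟨mem_ball_self (by positivity), mem_ball_self one_pos⟩
      filter_upwards [mem_nhdsWithin_of_mem_nhds hnb2] with p hp
      refine Filter.Eventually.of_forall fun θ _ => ?_
      rw [norm_mul, norm_K hrpos]
      have hmem : ((p.1 + circleMap 0 r θ, p.2) : ℂ × ℂ) ∈ S := by
        constructor
        · have h2 : dist p.1 p₀.1 < r/2 := mem_ball.mp hp.1
          have := dist_triangle (p.1 + circleMap 0 r θ) p.1 p₀.1
          have h1 := hcirc p.1 θ
          exact mem_closedBall.mpr (by linarith)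
        · exact ball_subset_closedBall hp.2
      have hCabs : ‖h (p.1 + circleMap 0 r θ) p.2‖ ≤ |C| := (hC _ hmem).trans (le_abs_self C)
      exact mul_le_mul_of_nonneg_left hCabs (by positivity)
    · exact intervalIntegrable_const
    · refine Filter.Eventually.of_forall fun θ _ => ?_
      have hmap : Set.MapsTo (fun p : ℂ × ℂ => ((p.1 + circleMap 0 r θ, p.2) : ℂ × ℂ)) W U2 := by
        intro p hp
        exact hsub2 p.1 hp.2.1 (mem_closedBall.mpr (hcirc p.1 θ))
      have h1 : ContinuousWithinAt
          (fun p : ℂ × ℂ => ((p.1 + circleMap 0 r θ, p.2) : ℂ × ℂ)) W p₀ :=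
        ((continuous_fst.add continuous_const).prodMk continuous_snd).continuousWithinAt
      have hcont : ContinuousWithinAt
          (fun p : ℂ × ℂ => h (p.1 + circleMap 0 r θ) p.2) W p₀ :=
        ContinuousWithinAt.comp (g := fun p : ℂ × ℂ => h p.1 p.2)
          (f := fun p : ℂ × ℂ => ((p.1 + circleMap 0 r θ, p.2) : ℂ × ℂ))
          (H.cont _ (hmap ⟨hp₀, mem_ball_self (by positivity), trivial⟩)) h1 hmap
      exact continuousWithinAt_const.mul hcont
  have hrep : ∀ p ∈ W, dTau h p.1 p.2 = ∫ θ in (0:ℝ)..(2*π), F p θ := fun p hp =>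
    H.repT hrpos (hsub2 p.1 hp.2.1) p.2
  have key2 : ContinuousWithinAt (fun p : ℂ × ℂ => dTau h p.1 p.2) W p₀ :=
    key.congr hrep (hrep _ ⟨hp₀, mem_ball_self (by positivity), trivial⟩)
  exact (continuousWithinAt_inter' (mem_nhdsWithin_of_mem_nhds hV)).mp key2

lemma hcirc_mem {r : ℝ} (hr : 0 < r) (w : ℂ) (θ : ℝ) : w + circleMap 0 r θ ∈ closedBall w r := by
  have : dist (w + circleMap 0 r θ) w ≤ r := by
    simp only [dist_eq_norm, add_sub_cancel_left, norm_circleMap_zero]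
    rw [_root_.abs_of_pos hr]
  exact mem_closedBall.mpr this

/-- The z-derivative of a Q-function is holomorphic in τ. -/
lemma Q.holo1Z {h : ℂ → ℂ → ℂ} (H : Q h) (z : ℂ) :
    DifferentiableOn ℂ (fun w => dZ h w z) UHP := by
  intro τ₀ hτ₀
  have him : 0 < τ₀.im := hτ₀
  set ε : ℝ := τ₀.im / 2 with hε
  have hεpos : 0 < ε := by positivity
  have hballU : closedBall τ₀ ε ⊆ UHP := closedBall_subset_UHP him (by rw [hε]; linarith)
  set F : ℂ → ℝ → ℂ := fun w θ => K 1 θ * h w (z + circleMap 0 1 θ) with hF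
  set F' : ℂ → ℝ → ℂ := fun w θ => K 1 θ * dTau h w (z + circleMap 0 1 θ) with hF'
  set S : Set (ℂ × ℂ) := closedBall τ₀ ε ×ˢ closedBall z 2 with hS
  have hScpt : IsCompact S := (isCompact_closedBall _ _).prod (isCompact_closedBall _ _)
  have hSsub : S ⊆ U2 := fun p hp => hballU hp.1
  obtain ⟨C, hC⟩ := hScpt.exists_bound_of_continuousOn (H.contT.mono hSsub)
  have key := (intervalIntegral.hasDerivAt_integral_of_dominated_loc_of_deriv_le
    (μ := volume) (F := F) (F' := F') (x₀ := τ₀) (a := (0:ℝ)) (b := 2*π)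
    (bound := fun _ => (2*π*1)⁻¹ * |C|) (Metric.ball_mem_nhds τ₀ hεpos) ?_ ?_ ?_ ?_ ?_ ?_).2
  · have hrep : ∀ w ∈ UHP, dZ h w z = ∫ θ in (0:ℝ)..(2*π), F w θ := fun w hw =>
      H.repZ hw z
    have heq : (fun w => dZ h w z) =ᶠ[𝓝 τ₀] fun w => ∫ θ in (0:ℝ)..(2*π), F w θ :=
      Filter.eventually_of_mem (isOpenUHP.mem_nhds hτ₀) hrep
    exact (key.differentiableAt.congr_of_eventuallyEq heq).differentiableWithinAt
  · filter_upwards [isOpenUHP.mem_nhds hτ₀] with w hw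
    exact ((continuous_K one_ne_zero).mul
      (((H.holo2 w hw).continuous).comp
        (continuous_const.add (continuous_circleMap 0 1)))).aestronglyMeasurable
  · exact ((continuous_K one_ne_zero).mul
      (((H.holo2 τ₀ hτ₀).continuous).comp
        (continuous_const.add (continuous_circleMap 0 1)))).intervalIntegrable _ _
  · have hco : Continuous fun θ : ℝ => dTau h τ₀ (z + circleMap 0 1 θ) := by
      apply (H.contT.comp_continuous (f := fun θ : ℝ => ((τ₀, z + circleMap 0 1 θ) : ℂ × ℂ)))
      · exact continuous_const.prodMk (continuous_const.add (continuous_circleMap 0 1))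
      · exact fun θ => hτ₀
    exact ((continuous_K one_ne_zero).mul hco).aestronglyMeasurable
  · refine Filter.Eventually.of_forall fun θ _ => fun w hw => ?_
    rw [hF', norm_mul, norm_K one_pos]
    have hmem : ((w, z + circleMap 0 1 θ) : ℂ × ℂ) ∈ S := by
      constructor
      · exact ball_subset_closedBall hw
      · have : dist (z + circleMap 0 1 θ) z ≤ 1 := mem_closedBall.mp (hcirc_mem one_pos z θ)
        exact mem_closedBall.mpr (by linarith)
    exact mul_le_mul_of_nonneg_left ((hC _ hmem).trans (le_abs_self C)) (by positivity)
  · exact intervalIntegrable_const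
  · refine Filter.Eventually.of_forall fun θ _ => fun w hw => ?_
    have hwU : w ∈ UHP := hballU (ball_subset_closedBall hw)
    exact (H.slice1 hwU (z + circleMap 0 1 θ)).hasDerivAt.const_mul (K 1 θ)

/-- The τ-derivative of a Q-function is entire in z. -/
lemma Q.holo2T {h : ℂ → ℂ → ℂ} (H : Q h) {τ : ℂ} (hτ : τ ∈ UHP) :
    Differentiable ℂ (fun z => dTau h τ z) := by
  intro z₀
  have him : 0 < τ.im := hτ
  set r : ℝ := τ.im / 2 with hr
  have hrpos : 0 < r := by positivity
  have hballU : closedBall τ r ⊆ UHP := closedBall_subset_UHP him (by rw [hr]; linarith)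
  set F : ℂ → ℝ → ℂ := fun z θ => K r θ * h (τ + circleMap 0 r θ) z with hF
  set F' : ℂ → ℝ → ℂ := fun z θ => K r θ * dZ h (τ + circleMap 0 r θ) z with hF'
  set S : Set (ℂ × ℂ) := closedBall τ r ×ˢ closedBall z₀ 1 with hS
  have hScpt : IsCompact S := (isCompact_closedBall _ _).prod (isCompact_closedBall _ _)
  have hSsub : S ⊆ U2 := fun p hp => hballU hp.1
  obtain ⟨C, hC⟩ := hScpt.exists_bound_of_continuousOn (H.contZ.mono hSsub)
  have hcoθ : ∀ z : ℂ, Continuous fun θ : ℝ => h (τ + circleMap 0 r θ) z := by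
    intro z
    apply (H.holo1 z).continuousOn.comp_continuous
      (continuous_const.add (continuous_circleMap 0 r))
    exact fun θ => hballU (hcirc_mem hrpos τ θ)
  have key := (intervalIntegral.hasDerivAt_integral_of_dominated_loc_of_deriv_le
    (μ := volume) (F := F) (F' := F') (x₀ := z₀) (a := (0:ℝ)) (b := 2*π)
    (bound := fun _ => (2*π*r)⁻¹ * |C|) (Metric.ball_mem_nhds z₀ one_pos) ?_ ?_ ?_ ?_ ?_ ?_).2
  · have hrep : ∀ z : ℂ, dTau h τ z = ∫ θ in (0:ℝ)..(2*π), F z θ := fun z =>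
      H.repT hrpos hballU z
    have heq : (fun z => dTau h τ z) = fun z => ∫ θ in (0:ℝ)..(2*π), F z θ := funext hrep
    rw [heq]
    exact key.differentiableAt
  · exact Filter.Eventually.of_forall fun z =>
      ((continuous_K hrpos.ne').mul (hcoθ z)).aestronglyMeasurable
  · exact ((continuous_K hrpos.ne').mul (hcoθ z₀)).intervalIntegrable _ _
  · have hco : Continuous fun θ : ℝ => dZ h (τ + circleMap 0 r θ) z₀ := by
      apply (H.contZ.comp_continuous
        (f := fun θ : ℝ => ((τ + circleMap 0 r θ, z₀) : ℂ × ℂ)))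
      · exact (continuous_const.add (continuous_circleMap 0 r)).prodMk continuous_const
      · exact fun θ => hballU (hcirc_mem hrpos τ θ)
    exact ((continuous_K hrpos.ne').mul hco).aestronglyMeasurable
  · refine Filter.Eventually.of_forall fun θ _ => fun z hz => ?_
    rw [hF', norm_mul, norm_K hrpos]
    have hmem : ((τ + circleMap 0 r θ, z) : ℂ × ℂ) ∈ S :=
      ⟨hcirc_mem hrpos τ θ, ball_subset_closedBall hz⟩
    exact mul_le_mul_of_nonneg_left ((hC _ hmem).trans (le_abs_self C)) (by positivity)
  · exact intervalIntegrable_const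
  · refine Filter.Eventually.of_forall fun θ _ => fun z hz => ?_
    have hmemU : τ + circleMap 0 r θ ∈ UHP := hballU (hcirc_mem hrpos τ θ)
    exact (H.slice2 hmemU z).hasDerivAt.const_mul (K r θ)

/-- Q is preserved by dZ. -/
lemma Q.dZQ {h : ℂ → ℂ → ℂ} (H : Q h) : Q (dZ h) where
  cont := H.contZ
  holo1 := fun z => H.holo1Z z
  holo2 := fun τ hτ => by
    have h1 : Differentiable ℂ (deriv (h τ)) := diff_deriv_entire (H.holo2 τ hτ)
    exact h1

/-- Q is preserved by dTau. -/
lemma Q.dTQ {h : ℂ → ℂ → ℂ} (H : Q h) : Q (dTau h) where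
  cont := H.contT
  holo1 := fun z => by
    have h1 : DifferentiableOn ℂ (deriv (fun w => h w z)) UHP :=
      diff_deriv_UHP (H.holo1 z)
    exact h1
  holo2 := fun τ hτ => H.holo2T hτ

lemma Q.heatQ {h : ℂ → ℂ → ℂ} (H : Q h) (m : ℤ) : Q (heatOp m h) where
  cont := by
    have h1 := H.contT
    have h2 := H.dZQ.contZ
    exact (continuousOn_const.mul h1).sub h2
  holo1 := fun z => by
    have h1 := H.dTQ.holo1 z
    have h2 := H.dZQ.dZQ.holo1 z
    exact (h1.const_mul _).sub h2
  holo2 := fun τ hτ => by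
    have h1 := H.dTQ.holo2 τ hτ
    have h2 := H.dZQ.dZQ.holo2 τ hτ
    exact (h1.const_mul _).sub h2

lemma Q.heatIter {h : ℂ → ℂ → ℂ} (H : Q h) (m : ℤ) (k : ℕ) : Q ((heatOp m)^[k] h) := by
  induction k with
  | zero => exact H
  | succ n ih => rw [Function.iterate_succ_apply']; exact ih.heatQ m

lemma Q.fmul {f : ℂ → ℂ} {h : ℂ → ℂ → ℂ} (hf : DifferentiableOn ℂ f UHP) (H : Q h) :
    Q (fun τ z => f τ * h τ z) where
  cont := by
    have h1 : ContinuousOn (fun p : ℂ × ℂ => f p.1) U2 :=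
      (hf.continuousOn.comp continuous_fst.continuousOn (fun p (hp : p ∈ U2) => hp))
    exact h1.mul H.cont
  holo1 := fun z => (hf.mul (H.holo1 z))
  holo2 := fun τ hτ => fun z => ((H.holo2 τ hτ) z).const_mul (f τ)

/-- Locality: heatOp only depends on values on U2. -/
lemma heatOp_congr {F G : ℂ → ℂ → ℂ} (m : ℤ) (hFG : ∀ τ ∈ UHP, ∀ z, F τ z = G τ z) :
    ∀ τ ∈ UHP, ∀ z, heatOp m F τ z = heatOp m G τ z := by
  intro τ hτ z
  have h1 : dTau F τ z = dTau G τ z := by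
    apply Filter.EventuallyEq.deriv_eq
    filter_upwards [isOpenUHP.mem_nhds hτ] with w hw using hFG w hw z
  have h2 : F τ = G τ := funext fun z' => hFG τ hτ z'
  simp only [heatOp, dZ, dTau] at h1 ⊢
  rw [h1, h2]

lemma heatOp_iter_congr {F G : ℂ → ℂ → ℂ} (m : ℤ) (k : ℕ)
    (hFG : ∀ τ ∈ UHP, ∀ z, F τ z = G τ z) :
    ∀ τ ∈ UHP, ∀ z, (heatOp m)^[k] F τ z = (heatOp m)^[k] G τ z := by
  induction k generalizing F G with
  | zero => exact hFG
  | succ n ih =>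
    intro τ hτ z
    rw [Function.iterate_succ_apply, Function.iterate_succ_apply]
    exact ih (heatOp_congr m hFG) τ hτ z

lemma heatOp_add {A B : ℂ → ℂ → ℂ} (m : ℤ) (HA : Q A) (HB : Q B) :
    ∀ τ ∈ UHP, ∀ z, heatOp m (fun τ' z' => A τ' z' + B τ' z') τ z
      = heatOp m A τ z + heatOp m B τ z := by
  intro τ hτ z
  have h1 : dTau (fun τ' z' => A τ' z' + B τ' z') τ z = dTau A τ z + dTau B τ z :=
    deriv_add (HA.slice1 hτ z) (HB.slice1 hτ z)
  have h2 : dZ (fun τ' z' => A τ' z' + B τ' z') τ = fun w => dZ A τ w + dZ B τ w :=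
    funext fun w => deriv_add (HA.slice2 hτ w) (HB.slice2 hτ w)
  have h3 : dZ (dZ (fun τ' z' => A τ' z' + B τ' z')) τ z = dZ (dZ A) τ z + dZ (dZ B) τ z := by
    show deriv (fun w => dZ (fun τ' z' => A τ' z' + B τ' z') τ w) z = _
    have : (fun w => dZ (fun τ' z' => A τ' z' + B τ' z') τ w)
        = fun w => dZ A τ w + dZ B τ w := h2
    rw [this]
    exact deriv_add (HA.dZQ.slice2 hτ z) (HB.dZQ.slice2 hτ z)
  simp only [heatOp, h1, h3]
  ring

lemma heatOp_iter_add {A B : ℂ → ℂ → ℂ} (m : ℤ) (k : ℕ) (HA : Q A) (HB : Q B) :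
    ∀ τ ∈ UHP, ∀ z, (heatOp m)^[k] (fun τ' z' => A τ' z' + B τ' z') τ z
      = (heatOp m)^[k] A τ z + (heatOp m)^[k] B τ z := by
  induction k generalizing A B with
  | zero => intro τ hτ z; rfl
  | succ n ih =>
    intro τ hτ z
    rw [Function.iterate_succ_apply, Function.iterate_succ_apply, Function.iterate_succ_apply]
    calc (heatOp m)^[n] (heatOp m fun τ' z' => A τ' z' + B τ' z') τ z
        = (heatOp m)^[n] (fun τ' z' => heatOp m A τ' z' + heatOp m B τ' z') τ z :=
          heatOp_iter_congr m n (heatOp_add m HA HB) τ hτ z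
      _ = _ := ih (HA.heatQ m) (HB.heatQ m) τ hτ z

lemma heatOp_fmul {f : ℂ → ℂ} {h : ℂ → ℂ → ℂ} (m : ℤ)
    (hf : DifferentiableOn ℂ f UHP) (H : Q h) :
    ∀ τ ∈ UHP, ∀ z, heatOp m (fun τ' z' => f τ' * h τ' z') τ z
      = (8 * (π : ℂ) * I * (m : ℂ) * deriv f τ) * h τ z + f τ * heatOp m h τ z := by
  intro τ hτ z
  have hfτ : DifferentiableAt ℂ f τ := hf.differentiableAt (isOpenUHP.mem_nhds hτ)
  have h1 : dTau (fun τ' z' => f τ' * h τ' z') τ z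
      = deriv f τ * h τ z + f τ * dTau h τ z :=
    deriv_mul hfτ (H.slice1 hτ z)
  have h2 : dZ (fun τ' z' => f τ' * h τ' z') τ = fun w => f τ * dZ h τ w :=
    funext fun w => deriv_const_mul_field (f τ)
  have h3 : dZ (dZ (fun τ' z' => f τ' * h τ' z')) τ z = f τ * dZ (dZ h) τ z := by
    show deriv (fun w => dZ (fun τ' z' => f τ' * h τ' z') τ w) z = _
    have : (fun w => dZ (fun τ' z' => f τ' * h τ' z') τ w) = fun w => f τ * dZ h τ w := h2
    rw [this]
    exact deriv_const_mul_field (f τ)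
  simp only [heatOp, h1, h3]
  ring

lemma diff_iter_deriv_UHP {f : ℂ → ℂ} (k : ℕ) (hf : DifferentiableOn ℂ f UHP) :
    DifferentiableOn ℂ (deriv^[k] f) UHP := by
  induction k with
  | zero => exact hf
  | succ n ih =>
    rw [Function.iterate_succ_apply']
    exact diff_deriv_UHP ih

lemma iter_deriv_const_mul (c : ℂ) (u : ℂ → ℂ) (k : ℕ) :
    deriv^[k] (fun τ => c * u τ) = fun τ => c * deriv^[k] u τ := by
  induction k generalizing u with
  | zero => rfl
  | succ n ih =>
    rw [Function.iterate_succ_apply', Function.iterate_succ_apply', ih]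
    exact funext fun τ => deriv_const_mul_field c

/-- The Pascal recombination step. -/
lemma pascal (c : ℂ) (u v : ℕ → ℂ) (n : ℕ) :
    (∑ j ∈ range (n+1), c^(n-j) * (n.choose j : ℂ) * (c * u (n-j+1)) * v j)
  + (∑ j ∈ range (n+1), c^(n-j) * (n.choose j : ℂ) * u (n-j) * v (j+1))
  = ∑ j ∈ range (n+2), c^(n+1-j) * ((n+1).choose j : ℂ) * u (n+1-j) * v j := by
  rw [Finset.sum_range_succ' (fun j => c^(n+1-j) * ((n+1).choose j : ℂ) * u (n+1-j) * v j) (n+1)]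
  rw [Finset.sum_range_succ' (fun j => c^(n-j) * (n.choose j : ℂ) * (c * u (n-j+1)) * v j) n]
  rw [Finset.sum_range_succ (fun j => c^(n-j) * (n.choose j : ℂ) * u (n-j) * v (j+1)) n]
  have e1 : ∀ j ∈ range n,
      c^(n-(j+1)) * (n.choose (j+1) : ℂ) * (c * u (n-(j+1)+1)) * v (j+1)
      = c^(n-j) * (n.choose (j+1) : ℂ) * u (n-j) * v (j+1) := by
    intro j hj
    have hjn : j < n := mem_range.mp hj
    have h1 : n - (j+1) + 1 = n - j := by omega
    have h2 : c^(n-(j+1)) * c = c^(n-j) := by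
      rw [← pow_succ, show n-(j+1)+1 = n-j from by omega]
    rw [h1, ← h2]
    ring
  have e2 : ∀ j ∈ range (n+1),
      c^(n+1-(j+1)) * ((n+1).choose (j+1) : ℂ) * u (n+1-(j+1)) * v (j+1)
      = c^(n-j) * ((n.choose j : ℂ) + (n.choose (j+1) : ℂ)) * u (n-j) * v (j+1) := by
    intro j hj
    have h1 : n+1-(j+1) = n-j := by omega
    rw [h1, Nat.choose_succ_succ]
    push_cast
    ring
  rw [Finset.sum_congr rfl e1, Finset.sum_congr rfl e2]
  have e3 : ∑ j ∈ range (n+1),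
      c^(n-j) * ((n.choose j : ℂ) + (n.choose (j+1) : ℂ)) * u (n-j) * v (j+1)
      = (∑ j ∈ range (n+1), c^(n-j) * (n.choose j : ℂ) * u (n-j) * v (j+1))
      + ∑ j ∈ range (n+1), c^(n-j) * (n.choose (j+1) : ℂ) * u (n-j) * v (j+1) := by
    rw [← Finset.sum_add_distrib]
    exact Finset.sum_congr rfl fun j _ => by ring
  rw [e3]
  rw [Finset.sum_range_succ (fun j => c^(n-j) * (n.choose (j+1) : ℂ) * u (n-j) * v (j+1)) n]
  rw [Finset.sum_range_succ (fun j => c^(n-j) * (n.choose j : ℂ) * u (n-j) * v (j+1)) n]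
  simp only [Nat.choose_succ_self, Nat.cast_zero, Nat.choose_self, Nat.cast_one,
    Nat.sub_self, Nat.choose_zero_right, pow_zero, Nat.sub_zero, Nat.add_sub_cancel]
  ring

/-- Main induction. -/
lemma main (m : ℤ) : ∀ (r : ℕ) (f : ℂ → ℂ) (h : ℂ → ℂ → ℂ),
    DifferentiableOn ℂ f UHP → Q h → ∀ τ ∈ UHP, ∀ z,
    (heatOp m)^[r] (fun τ' z' => f τ' * h τ' z') τ z =
      ∑ j ∈ range (r + 1),
        (8 * (π : ℂ) * I * (m : ℂ)) ^ (r - j) * (r.choose j : ℂ) *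
          deriv^[r - j] f τ * (heatOp m)^[j] h τ z := by
  intro r
  induction r with
  | zero =>
    intro f h hf H τ hτ z
    simp
  | succ n ih =>
    intro f h hf H τ hτ z
    set c : ℂ := 8 * (π : ℂ) * I * (m : ℂ) with hc
    rw [Function.iterate_succ_apply]
    have hf' : DifferentiableOn ℂ (fun τ' => c * deriv f τ') UHP :=
      (diff_deriv_UHP hf).const_mul c
    have step1 : (heatOp m)^[n] (heatOp m fun τ' z' => f τ' * h τ' z') τ z
        = (heatOp m)^[n] (fun τ' z' => (fun w => c * deriv f w) τ' * h τ' z'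
            + f τ' * heatOp m h τ' z') τ z := by
      apply heatOp_iter_congr m n _ τ hτ z
      intro τ' hτ' z'
      have := heatOp_fmul m hf H τ' hτ' z'
      rw [this, hc]
    rw [step1]
    have step2 := heatOp_iter_add m n (Q.fmul hf' H) (Q.fmul hf (H.heatQ m)) τ hτ z
    rw [step2]
    rw [ih (fun w => c * deriv f w) h hf' H τ hτ z,
        ih f (heatOp m h) hf (H.heatQ m) τ hτ z]
    have e1 : ∀ j ∈ range (n+1),
        c ^ (n - j) * (n.choose j : ℂ) * deriv^[n-j] (fun w => c * deriv f w) τ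
          * (heatOp m)^[j] h τ z
        = c^(n-j) * (n.choose j : ℂ) * (c * deriv^[(n-j)+1] f τ) * (heatOp m)^[j] h τ z := by
      intro j hj
      rw [iter_deriv_const_mul c (deriv f) (n-j)]
      rw [← Function.iterate_succ_apply]
    have e2 : ∀ j ∈ range (n+1),
        c ^ (n - j) * (n.choose j : ℂ) * deriv^[n-j] f τ * (heatOp m)^[j] (heatOp m h) τ z
        = c^(n-j) * (n.choose j : ℂ) * deriv^[n-j] f τ * (heatOp m)^[j+1] h τ z := by
      intro j hj
      rw [← Function.iterate_succ_apply]
    rw [Finset.sum_congr rfl e1, Finset.sum_congr rfl e2]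
    have := pascal c (fun k => deriv^[k] f τ) (fun j => (heatOp m)^[j] h τ z) n
    simpa using this

end HeatAux

end HeatAuxSect

/-- **Product rule for powers of the heat operator** (Lemma 1 of Choie-Eholzer):
if `f` is holomorphic on `ℍ` (depending only on `τ`) and `g` is holomorphic on `ℍ × ℂ`, then
`L_m^r(fg) = Σ_{j=0}^r (8πim)^{r−j} C(r,j) (∂_τ^{r−j} f)(L_m^j g)`. -/
theorem heatOp_iterate_mul (f : ℂ → ℂ) (g : ℂ → ℂ → ℂ)
    (hf : DifferentiableOn ℂ f UHP)
    (hg : DifferentiableOn ℂ (fun p : ℂ × ℂ => g p.1 p.2) {p : ℂ × ℂ | 0 < p.1.im})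
    (r : ℕ) (m : ℕ) (τ : ℂ) (hτ : τ ∈ UHP) (z : ℂ) :
    (heatOp (m : ℤ))^[r] (fun τ' z' => f τ' * g τ' z') τ z =
      ∑ j ∈ Finset.range (r + 1),
        (8 * (π : ℂ) * I * (m : ℂ)) ^ (r - j) * (r.choose j : ℂ) *
          deriv^[r - j] f τ * (heatOp (m : ℤ))^[j] g τ z := by
  have H : HeatAux.Q g := HeatAux.Q.of_phol hg
  have h1 := HeatAux.main (m : ℤ) r f g hf H τ hτ z
  have h2 : (((m : ℤ) : ℂ)) = (m : ℂ) := by push_cast; ring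
  rw [h2] at h1
  exact h1

end
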